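/- If x₀, x₁, x₂ are complex roots of a trinomial t^m + A t^n + B with |x₀| ≥ |x₁| ≥ |x₂| and x₁ ≠ 0, x₀ ≠ 0, then 1 − |x₂/x₁| ≤ 2|x₁/x₀| + 2|x₁/x₀|³. -/

import Mathlib

/-- If `x₀, x₁, x₂` are complex roots of `t^m + A t^n + B` with `|x₀| ≥ |x₁| ≥ |x₂|`,
`x₀ ≠ 0`, `x₁ ≠ 0`, then `1 − |x₂/x₁| ≤ 2|x₁/x₀| + 2|x₁/x₀|³`. -/
theorem trinomial_roots_complex_estimate_weak (m n : ℕ) (A B : ℂ)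
    (hmn : n < m) (hn : 0 < n)
    (x₀ x₁ x₂ : ℂ)
    (h₀ : x₀ ^ m + A * x₀ ^ n + B = 0)
    (h₁ : x₁ ^ m + A * x₁ ^ n + B = 0)
    (h₂ : x₂ ^ m + A * x₂ ^ n + B = 0)
    (hle₁ : ‖x₁‖ ≤ ‖x₀‖)
    (hle₂ : ‖x₂‖ ≤ ‖x₁‖)
    (hx₀ : x₀ ≠ 0) (hx₁ : x₁ ≠ 0) :
    1 - ‖x₂ / x₁‖ ≤
      2 * ‖x₁ / x₀‖ + 2 * ‖x₁ / x₀‖ ^ 3 := by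
  rw [norm_div, norm_div]
  set a := ‖x₀‖ with ha_def
  set b := ‖x₁‖ with hb_def
  set c := ‖x₂‖ with hc_def
  have ha : 0 < a := norm_pos_iff.mpr hx₀
  have hb : 0 < b := norm_pos_iff.mpr hx₁
  have hc : 0 ≤ c := norm_nonneg _
  have hρ0 : 0 ≤ b / a := by positivity
  have hρ1 : b / a ≤ 1 := by rw [div_le_one ha]; exact hle₁
  have hσ0 : 0 ≤ c / b := by positivity
  have hσ1 : c / b ≤ 1 := by rw [div_le_one hb]; exact hle₂
  by_cases h3 : 3 ≤ m
  · -- main case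
    obtain ⟨k, hk, rfl⟩ : ∃ k, 0 < k ∧ m = n + k := ⟨m - n, by omega, by omega⟩
    have hD : x₀^(n+k) * (x₁^n - x₂^n)
        = x₀^n*(x₁^(n+k) - x₂^(n+k)) - (x₁^(n+k)*x₂^n - x₁^n*x₂^(n+k)) := by
      linear_combination (x₁^n - x₂^n) * h₀ - (x₀^n - x₂^n) * h₁ + (x₀^n - x₁^n) * h₂
    have step1 : b^n - c^n ≤ ‖x₁^n - x₂^n‖ := by
      have h := abs_norm_sub_norm_le (x₁^n) (x₂^n)
      have h' := le_trans (le_abs_self (‖x₁^n‖ - ‖x₂^n‖)) h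
      simpa [norm_pow] using h'
    have step2 : ‖x₀^n*(x₁^(n+k) - x₂^(n+k)) - (x₁^(n+k)*x₂^n - x₁^n*x₂^(n+k))‖
        ≤ 2 * a^n * b^(n+k) + 2 * (b^(n+k) * b^n) := by
      have t1 := norm_sub_le (x₀^n*(x₁^(n+k) - x₂^(n+k))) (x₁^(n+k)*x₂^n - x₁^n*x₂^(n+k))
      have t2 := norm_sub_le (x₁^(n+k)) (x₂^(n+k))
      have t3 := norm_sub_le (x₁^(n+k)*x₂^n) (x₁^n*x₂^(n+k))
      simp only [norm_mul, norm_pow] at t1 t2 t3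
      have hcb_n : c^n ≤ b^n := pow_le_pow_left₀ hc hle₂ n
      have hcb_m : c^(n+k) ≤ b^(n+k) := pow_le_pow_left₀ hc hle₂ (n+k)
      have hbn : (0:ℝ) ≤ b^n := by positivity
      have hbm : (0:ℝ) ≤ b^(n+k) := by positivity
      have ham : (0:ℝ) ≤ a^n := by positivity
      nlinarith [mul_le_mul_of_nonneg_left t2 ham, mul_le_mul_of_nonneg_left hcb_n hbm,
        mul_le_mul_of_nonneg_left hcb_m hbn, mul_le_mul_of_nonneg_left hcb_m ham]
    have hmain : a^(n+k) * (b^n - c^n) ≤ 2 * a^n * b^(n+k) + 2 * (b^(n+k) * b^n) := by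
      calc a^(n+k) * (b^n - c^n) ≤ a^(n+k) * ‖x₁^n - x₂^n‖ := by
            apply mul_le_mul_of_nonneg_left step1 (by positivity)
        _ = ‖x₀^(n+k) * (x₁^n - x₂^n)‖ := by simp [norm_mul, norm_pow, ha_def]
        _ = ‖x₀^n*(x₁^(n+k) - x₂^(n+k)) - (x₁^(n+k)*x₂^n - x₁^n*x₂^(n+k))‖ := by
            rw [hD]
        _ ≤ _ := step2
    have key : 1 - (c/b)^n ≤ 2 * (b/a)^k + 2 * (b/a)^(n+k) := by
      rw [← mul_le_mul_iff_of_pos_right (show (0:ℝ) < a^(n+k) * b^n by positivity)]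
      have e0 : (1 - (c/b)^n) * (a^(n+k) * b^n) = a^(n+k) * (b^n - c^n) := by
        rw [div_pow]; field_simp
      have e1 : (b/a)^k * (a^(n+k) * b^n) = a^n * b^(n+k) := by
        rw [div_pow, pow_add a, pow_add b]; field_simp
      have e2 : (b/a)^(n+k) * (a^(n+k) * b^n) = b^(n+k) * b^n := by
        rw [div_pow]; field_simp
      calc (1 - (c/b)^n) * (a^(n+k) * b^n) = a^(n+k) * (b^n - c^n) := e0
        _ ≤ 2 * a^n * b^(n+k) + 2 * (b^(n+k) * b^n) := hmain
        _ = (2 * (b/a)^k + 2 * (b/a)^(n+k)) * (a^(n+k) * b^n) := by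
            linear_combination (-2 : ℝ) * e1 - 2 * e2
    have hσn : (c/b)^n ≤ c/b := pow_le_of_le_one hσ0 hσ1 (by omega)
    have hρk : (b/a)^k ≤ (b/a)^1 := pow_le_pow_of_le_one hρ0 hρ1 (by omega)
    have hρm : (b/a)^(n+k) ≤ (b/a)^3 := pow_le_pow_of_le_one hρ0 hρ1 (by omega)
    rw [pow_one] at hρk
    linarith
  · -- m = 2, n = 1
    have hm2 : m = 2 := by omega
    have hn1 : n = 1 := by omega
    subst hm2 hn1
    simp only [pow_one] at h₀ h₁ h₂
    by_cases h01 : x₀ = x₁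
    · have hab : b = a := by rw [hb_def, ha_def, h01]
      rw [hab, div_self (ne_of_gt ha)]
      have : 0 ≤ c / a := by positivity
      nlinarith
    by_cases h12 : x₁ = x₂
    · have hcb : c = b := by rw [hc_def, hb_def, h12]
      rw [hcb, div_self (ne_of_gt hb)]
      have h1 : 0 ≤ 2*(b/a) + 2*(b/a)^3 := by positivity
      linarith
    · have e01 : (x₀ - x₁) * (x₀ + x₁ + A) = 0 := by linear_combination h₀ - h₁
      have e12 : (x₁ - x₂) * (x₁ + x₂ + A) = 0 := by linear_combination h₁ - h₂
      have s01 : x₀ + x₁ + A = 0 := by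
        rcases mul_eq_zero.mp e01 with h | h
        · exact absurd (sub_eq_zero.mp h) h01
        · exact h
      have s12 : x₁ + x₂ + A = 0 := by
        rcases mul_eq_zero.mp e12 with h | h
        · exact absurd (sub_eq_zero.mp h) h12
        · exact h
      have h02 : x₀ = x₂ := by linear_combination s01 - s12
      have hac : a = c := by rw [ha_def, hc_def, h02]
      have hcb : c = b := le_antisymm hle₂ (hac ▸ hle₁)
      rw [hcb, div_self (ne_of_gt hb)]
      have h1 : 0 ≤ 2*(b/a) + 2*(b/a)^3 := by positivity
      linarith
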